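/- Let n ≥ 2 and m ≥ 1 be integers, and let A₁, …, Aₙ be Hermitian m×m complex matrices such that A(p) := p₁A₁ + ⋯ + pₙAₙ is invertible for every p ∈ ℝⁿ \ {0}. Then for every p ∈ ℝⁿ \ {0} the number of positive eigenvalues of A(p), counted with multiplicity, equals the number of negative eigenvalues of A(p), counted with multiplicity; in particular m is even. -/

import Mathlib

open Matrix

section Aux

open Finset Module
variable {m : ℕ} {M : Matrix (Fin m) (Fin m) ℂ}

noncomputable def qf (M : Matrix (Fin m) (Fin m) ℂ) (x : Fin m → ℂ) : ℝ := (star x ⬝ᵥ M *ᵥ x).re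

theorem span_lemma (hp : M.IsHermitian) (s : Finset (Fin m)) :
    ∃ V : Submodule ℂ (EuclideanSpace ℂ (Fin m)), finrank ℂ V = s.card ∧
      ∀ x : EuclideanSpace ℂ (Fin m), x ∈ V →
        ∃ c : Fin m → ℂ, (∀ i, c i ≠ 0 → i ∈ s) ∧ (x ≠ 0 → ∃ i ∈ s, c i ≠ 0) ∧
          qf M ⇑x = ∑ i ∈ s, hp.eigenvalues i * Complex.normSq (c i) := by
  classical
  set v := hp.eigenvectorBasis with hv
  have li : LinearIndependent ℂ (fun i : ↑↑s => v ↑i) :=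
    v.orthonormal.linearIndependent.comp Subtype.val Subtype.val_injective
  refine ⟨Submodule.span ℂ (v '' ↑s), ?_, ?_⟩
  · rw [Set.image_eq_range]
    exact (finrank_span_eq_card li).trans (by simp)
  · intro x hx
    rw [Set.image_eq_range, Submodule.mem_span_range_iff_exists_fun] at hx
    obtain ⟨c, hc⟩ := hx
    set c' : Fin m → ℂ := fun i => if h : i ∈ s then c ⟨i, h⟩ else 0 with hc'
    have hsupp : ∀ i, c' i ≠ 0 → i ∈ s := by
      intro i hi
      by_contra h
      simp [hc', dif_neg h] at hi
    have hxs : x = ∑ i, c' i • v i := by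
      rw [← hc]
      have h1 : ∑ i : Fin m, c' i • v i = ∑ i ∈ s, c' i • v i :=
        (Finset.sum_subset s.subset_univ (by
          intro i _ his
          simp [hc', dif_neg his])).symm
      have h2 : ∑ i ∈ s, c' i • v i = ∑ i : ↑↑s, c' ↑i • v ↑i :=
        (Finset.sum_coe_sort s _).symm
      rw [h1, h2]
      exact (Finset.sum_congr rfl fun i _ => by simp [hc']).symm
    refine ⟨c', hsupp, ?_, ?_⟩
    · intro hx0
      by_contra h
      push_neg at h
      have : ∀ i, c' i = 0 := by
        intro i
        by_cases his : i ∈ s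
        · exact h i his
        · simp [hc', dif_neg his]
      exact hx0 (by rw [hxs]; simp [this])
    · set lam := hp.eigenvalues with hlam
      set z : EuclideanSpace ℂ (Fin m) := ∑ i, (c' i * (lam i : ℂ)) • v i with hz
      have hMx : M *ᵥ ⇑x = ⇑z := by
        rw [hxs]
        rw [hz, WithLp.ofLp_sum, WithLp.ofLp_sum]; simp only [WithLp.ofLp_smul]
        show M *ᵥ (∑ i, c' i • (⇑(v i) : Fin m → ℂ)) = ∑ i, (c' i * (lam i : ℂ)) • (⇑(v i) : Fin m → ℂ)
        rw [show M *ᵥ (∑ i, c' i • (⇑(v i) : Fin m → ℂ)) = ∑ i, c' i • (M *ᵥ ⇑(v i)) by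
          simp only [← Matrix.mulVecLin_apply, map_sum, map_smul]]
        refine Finset.sum_congr rfl fun i _ => ?_
        rw [hp.mulVec_eigenvectorBasis i]
        rw [show (lam i • (⇑(v i) : Fin m → ℂ)) = ((lam i : ℂ)) • ⇑(v i) by
          rw [← algebraMap_smul ℂ (lam i) (⇑(v i) : Fin m → ℂ)]; norm_num]
        rw [smul_smul]
      have hinner : qf M ⇑x = (inner ℂ x z : ℂ).re := by
        rw [qf, hMx, EuclideanSpace.inner_eq_star_dotProduct, dotProduct_comm]
      rw [hinner, hxs, hz, v.orthonormal.inner_sum c' (fun i => c' i * (lam i : ℂ)) univ]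
      rw [Complex.re_sum]
      have hterm : ∀ i, ((starRingEnd ℂ) (c' i) * (c' i * (lam i : ℂ))).re
          = lam i * Complex.normSq (c' i) := by
        intro i
        simp [Complex.mul_re, Complex.normSq_apply]; ring
      rw [Finset.sum_congr rfl fun i _ => hterm i]
      exact (Finset.sum_subset s.subset_univ (by
        intro i _ his
        simp [hc', dif_neg his])).symm

theorem dim_bound {g : (Fin m → ℂ) → ℝ} (V W : Submodule ℂ (EuclideanSpace ℂ (Fin m)))
    (hV : ∀ x : EuclideanSpace ℂ (Fin m), x ∈ V → x ≠ 0 → 0 < g ⇑x)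
    (hW : ∀ x : EuclideanSpace ℂ (Fin m), x ∈ W → g ⇑x ≤ 0) :
    finrank ℂ V + finrank ℂ W ≤ m := by
  have hdisj : Disjoint V W := by
    rw [Submodule.disjoint_def]
    intro x hxV hxW
    by_contra hx0
    exact absurd (hW x hxW) (not_le.2 (hV x hxV hx0))
  calc finrank ℂ V + finrank ℂ W ≤ finrank ℂ (EuclideanSpace ℂ (Fin m)) :=
        Submodule.finrank_add_finrank_le_of_disjoint hdisj
    _ = m := finrank_euclideanSpace_fin

theorem eig_ne_zero (hp : M.IsHermitian) (hU : IsUnit M) (i : Fin m) :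
    hp.eigenvalues i ≠ 0 := by
  have hdet : IsUnit M.det := (Matrix.isUnit_iff_isUnit_det M).1 hU
  rw [hp.det_eq_prod_eigenvalues] at hdet
  have := hdet.ne_zero
  rw [Finset.prod_ne_zero_iff] at this
  intro h
  exact this i (Finset.mem_univ i) (by rw [h]; simp)

theorem count_sum (hp : M.IsHermitian) (hU : IsUnit M) :
    (Finset.univ.filter fun i => 0 < hp.eigenvalues i).card
      + (Finset.univ.filter fun i => hp.eigenvalues i < 0).card = m := by
  classical
  have : (Finset.univ.filter fun i => hp.eigenvalues i < 0)
      = (Finset.univ.filter fun i => ¬ 0 < hp.eigenvalues i) := by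
    apply Finset.filter_congr
    intro i _
    have := eig_ne_zero hp hU i
    constructor
    · intro h; exact not_lt.2 h.le
    · intro h; exact lt_of_le_of_ne (not_lt.1 h) this
  rw [this, Finset.card_filter_add_card_filter_not]
  simp

theorem le_posC (hp : M.IsHermitian) (V : Submodule ℂ (EuclideanSpace ℂ (Fin m)))
    (hV : ∀ x : EuclideanSpace ℂ (Fin m), x ∈ V → x ≠ 0 → 0 < qf M ⇑x) :
    finrank ℂ V ≤ (Finset.univ.filter fun i => 0 < hp.eigenvalues i).card := by
  classical
  obtain ⟨W, hWrank, hWmem⟩ := span_lemma hp (Finset.univ.filter fun i => ¬ 0 < hp.eigenvalues i)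
  have hW : ∀ x : EuclideanSpace ℂ (Fin m), x ∈ W → qf M ⇑x ≤ 0 := by
    intro x hx
    obtain ⟨c, -, -, hq⟩ := hWmem x hx
    rw [hq]
    apply Finset.sum_nonpos
    intro i hi
    have hneg : ¬ 0 < hp.eigenvalues i := (Finset.mem_filter.1 hi).2
    exact mul_nonpos_of_nonpos_of_nonneg (not_lt.1 hneg) (Complex.normSq_nonneg _)
  have := dim_bound V W hV hW
  rw [hWrank] at this
  have hcard := Finset.card_filter_add_card_filter_not
    (s := (Finset.univ : Finset (Fin m))) (p := fun i => 0 < hp.eigenvalues i)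
  simp only [Finset.card_univ, Fintype.card_fin] at hcard
  omega

theorem le_negC (hp : M.IsHermitian) (V : Submodule ℂ (EuclideanSpace ℂ (Fin m)))
    (hV : ∀ x : EuclideanSpace ℂ (Fin m), x ∈ V → x ≠ 0 → qf M ⇑x < 0) :
    finrank ℂ V ≤ (Finset.univ.filter fun i => hp.eigenvalues i < 0).card := by
  classical
  obtain ⟨W, hWrank, hWmem⟩ := span_lemma hp (Finset.univ.filter fun i => ¬ hp.eigenvalues i < 0)
  have hW : ∀ x : EuclideanSpace ℂ (Fin m), x ∈ W → (fun y => - qf M y) ⇑x ≤ 0 := by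
    intro x hx
    obtain ⟨c, -, -, hq⟩ := hWmem x hx
    simp only [neg_nonpos, hq]
    apply Finset.sum_nonneg
    intro i hi
    have hpos : ¬ hp.eigenvalues i < 0 := (Finset.mem_filter.1 hi).2
    exact mul_nonneg (not_lt.1 hpos) (Complex.normSq_nonneg _)
  have := dim_bound (g := fun y => - qf M y) V W
    (fun x hx h0 => by simpa using hV x hx h0) hW
  rw [hWrank] at this
  have hcard := Finset.card_filter_add_card_filter_not
    (s := (Finset.univ : Finset (Fin m))) (p := fun i => hp.eigenvalues i < 0)
  simp only [Finset.card_univ, Fintype.card_fin] at hcard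
  omega

theorem exists_posC (hp : M.IsHermitian) :
    ∃ V : Submodule ℂ (EuclideanSpace ℂ (Fin m)),
      finrank ℂ V = (Finset.univ.filter fun i => 0 < hp.eigenvalues i).card ∧
      ∀ x : EuclideanSpace ℂ (Fin m), x ∈ V → x ≠ 0 → 0 < qf M ⇑x := by
  classical
  obtain ⟨V, hrank, hmem⟩ := span_lemma hp (Finset.univ.filter fun i => 0 < hp.eigenvalues i)
  refine ⟨V, hrank, fun x hx hx0 => ?_⟩
  obtain ⟨c, hsupp, hne, hq⟩ := hmem x hx
  obtain ⟨i, hi, hci⟩ := hne hx0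
  rw [hq]
  apply Finset.sum_pos'
  · intro j hj
    exact mul_nonneg (le_of_lt (Finset.mem_filter.1 hj).2) (Complex.normSq_nonneg _)
  · exact ⟨i, hi, mul_pos (Finset.mem_filter.1 hi).2 (Complex.normSq_pos.2 hci)⟩

theorem exists_negC (hp : M.IsHermitian) :
    ∃ V : Submodule ℂ (EuclideanSpace ℂ (Fin m)),
      finrank ℂ V = (Finset.univ.filter fun i => hp.eigenvalues i < 0).card ∧
      ∀ x : EuclideanSpace ℂ (Fin m), x ∈ V → x ≠ 0 → qf M ⇑x < 0 := by
  classical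
  obtain ⟨V, hrank, hmem⟩ := span_lemma hp (Finset.univ.filter fun i => hp.eigenvalues i < 0)
  refine ⟨V, hrank, fun x hx hx0 => ?_⟩
  obtain ⟨c, hsupp, hne, hq⟩ := hmem x hx
  obtain ⟨i, hi, hci⟩ := hne hx0
  rw [hq]
  have : ∑ j ∈ (Finset.univ.filter fun i => hp.eigenvalues i < 0),
      (- hp.eigenvalues j) * Complex.normSq (c j) > 0 := by
    apply Finset.sum_pos'
    · intro j hj
      exact mul_nonneg (by linarith [(Finset.mem_filter.1 hj).2]) (Complex.normSq_nonneg _)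
    · exact ⟨i, hi, mul_pos (by linarith [(Finset.mem_filter.1 hi).2]) (Complex.normSq_pos.2 hci)⟩
  rw [show ∑ j ∈ (Finset.univ.filter fun i => hp.eigenvalues i < 0),
      (- hp.eigenvalues j) * Complex.normSq (c j)
    = - ∑ j ∈ (Finset.univ.filter fun i => hp.eigenvalues i < 0),
      hp.eigenvalues j * Complex.normSq (c j) by rw [← Finset.sum_neg_distrib]; ring_nf] at this
  linarith

theorem qf_neg (x : Fin m → ℂ) : qf (-M) x = - qf M x := by
  rw [qf, qf, Matrix.neg_mulVec, dotProduct_neg, Complex.neg_re]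

theorem qf_csmul (c : ℂ) (x : Fin m → ℂ) :
    qf M (c • x) = Complex.normSq c * qf M x := by
  rw [qf, qf, Matrix.mulVec_smul, star_smul, smul_dotProduct, dotProduct_smul,
    smul_smul, smul_eq_mul, show star c * c = (Complex.normSq c : ℂ) by
      rw [RCLike.star_def, Complex.normSq_eq_conj_mul_self]]
  simp [Complex.mul_re]

theorem posC_neg_eq_negC (hp : M.IsHermitian) (hU : IsUnit M) :
    (Finset.univ.filter fun i => 0 < hp.neg.eigenvalues i).card
      = (Finset.univ.filter fun i => hp.eigenvalues i < 0).card := by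
  classical
  apply le_antisymm
  · obtain ⟨V, hrank, hV⟩ := exists_posC hp.neg
    rw [← hrank]
    exact le_negC hp V (fun x hx h0 => by
      have := hV x hx h0
      rw [qf_neg] at this
      linarith)
  · obtain ⟨V, hrank, hV⟩ := exists_negC hp
    rw [← hrank]
    exact le_posC hp.neg V (fun x hx h0 => by
      rw [qf_neg]
      linarith [hV x hx h0])

theorem real_smul_eq {r : ℝ} {x : EuclideanSpace ℂ (Fin m)} : r • x = ((r : ℂ)) • x := by
  rw [← algebraMap_smul ℂ r x]; norm_num

theorem stability {n : ℕ} (A : Fin n → Matrix (Fin m) (Fin m) ℂ) (p₀ : Fin n → ℝ)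
    (V : Submodule ℂ (EuclideanSpace ℂ (Fin m)))
    (hV : ∀ x : EuclideanSpace ℂ (Fin m), x ∈ V → x ≠ 0 →
      0 < qf (∑ α, ((p₀ α : ℂ)) • A α) ⇑x) :
    ∃ U : Set (Fin n → ℝ), IsOpen U ∧ p₀ ∈ U ∧
      ∀ p ∈ U, ∀ x : EuclideanSpace ℂ (Fin m), x ∈ V → x ≠ 0 →
        0 < qf (∑ α, ((p α : ℂ)) • A α) ⇑x := by
  classical
  set ψ : (Fin n → ℝ) × EuclideanSpace ℂ (Fin m) → ℝ := fun pz =>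
    (∑ i, (starRingEnd ℂ) (⇑pz.2 i) * ∑ j, (∑ α, (pz.1 α : ℂ) * A α i j) * ⇑pz.2 j).re
    with hψdef
  have hψeq : ∀ (p : Fin n → ℝ) (x : EuclideanSpace ℂ (Fin m)),
      qf (∑ α, ((p α : ℂ)) • A α) ⇑x = ψ (p, x) := by
    intro p x
    simp only [hψdef, qf]
    simp [Matrix.mulVec, dotProduct, Matrix.sum_apply, Matrix.smul_apply, smul_eq_mul,
      Pi.star_apply, RCLike.star_def]
  have hψ : Continuous ψ := by
    apply Complex.continuous_re.comp
    apply continuous_finset_sum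
    intro i _
    apply Continuous.mul
    · exact Complex.continuous_conj.comp ((EuclideanSpace.proj i).continuous.comp continuous_snd)
    · apply continuous_finset_sum
      intro j _
      apply Continuous.mul
      · apply continuous_finset_sum
        intro α _
        exact (Complex.continuous_ofReal.comp ((continuous_apply α).comp continuous_fst)).mul
          continuous_const
      · exact (EuclideanSpace.proj j).continuous.comp continuous_snd
  have hΩ : IsOpen {pz : (Fin n → ℝ) × EuclideanSpace ℂ (Fin m) | 0 < ψ pz} :=
    isOpen_lt continuous_const hψ
  set t : Set (EuclideanSpace ℂ (Fin m)) := Metric.sphere 0 1 ∩ ↑V with ht_def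
  have ht : IsCompact t :=
    (isCompact_sphere (0 : EuclideanSpace ℂ (Fin m)) 1).inter_right
      (Submodule.closed_of_finiteDimensional V)
  have hsub : ({p₀} ×ˢ t) ⊆ {pz | 0 < ψ pz} := by
    rintro ⟨p, x⟩ ⟨hp, hx⟩
    simp only [Set.mem_singleton_iff] at hp
    subst hp
    obtain ⟨hxs, hxV⟩ := hx
    have hx1 : ‖x‖ = 1 := by simpa using hxs
    have hx0 : x ≠ 0 := by
      intro h
      rw [h] at hx1
      simp at hx1
    have := hV x hxV hx0
    rwa [hψeq] at this
  obtain ⟨u, w, hu, hw, hpu, htw, huw⟩ :=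
    generalized_tube_lemma isCompact_singleton ht hΩ hsub
  refine ⟨u, hu, hpu rfl, ?_⟩
  intro p hp x hxV hx0
  set r : ℝ := ‖x‖ with hr
  have hr0 : r ≠ 0 := by simpa [hr] using hx0
  set y : EuclideanSpace ℂ (Fin m) := (r⁻¹ : ℝ) • x with hy
  have hyV : y ∈ V := by
    rw [hy, real_smul_eq]
    exact V.smul_mem _ hxV
  have hy1 : ‖y‖ = 1 := by
    rw [hy, norm_smul]
    simp [hr, abs_of_nonneg (inv_nonneg.2 (norm_nonneg x)), inv_mul_cancel₀ hr0]
    exact inv_mul_cancel₀ (norm_ne_zero_iff.2 hx0)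
  have hyt : y ∈ t := ⟨by simpa using hy1, hyV⟩
  have hmem : (p, y) ∈ {pz : (Fin n → ℝ) × EuclideanSpace ℂ (Fin m) | 0 < ψ pz} :=
    huw ⟨hp, htw hyt⟩
  have hqy : 0 < qf (∑ α, ((p α : ℂ)) • A α) ⇑y := by
    rw [hψeq]
    exact hmem
  have hxy : x = (r : ℝ) • y := by
    rw [hy, smul_smul]
    simp [mul_inv_cancel₀ hr0]
  have hcoe : (⇑x : Fin m → ℂ) = ((r : ℂ)) • ⇑y := by
    rw [hxy, real_smul_eq]; rfl
  rw [hcoe, qf_csmul]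
  apply mul_pos _ hqy
  simp [Complex.normSq_ofReal]
  positivity

theorem eigen_congr {M₁ M₂ : Matrix (Fin m) (Fin m) ℂ} (h : M₁ = M₂)
    (h₁ : M₁.IsHermitian) (h₂ : M₂.IsHermitian) : h₁.eigenvalues = h₂.eigenvalues := by
  subst h; rfl

end Aux

/-- For an elliptic family of Hermitian matrices `A₁, …, Aₙ` (`n ≥ 2`),
the Hermitian matrix `A(p) = p₁A₁ + ⋯ + pₙAₙ` has, for every `p ≠ 0`, as many positive
eigenvalues as negative ones (counted with multiplicity); in particular `m` is even. -/
theorem number_of_positive_eigenvalues_eq_number_of_negative_and_even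
    {n m : ℕ} (hn : 2 ≤ n) (hm : 1 ≤ m)
    (A : Fin n → Matrix (Fin m) (Fin m) ℂ)
    (hHerm : ∀ α, (A α).IsHermitian)
    (hell : ∀ p : Fin n → ℝ, p ≠ 0 → IsUnit (∑ α, (p α : ℂ) • A α)) :
    (∀ p : Fin n → ℝ, p ≠ 0 → ∀ hp : (∑ α, (p α : ℂ) • A α).IsHermitian,
      (Finset.univ.filter fun i => 0 < hp.eigenvalues i).card =
        (Finset.univ.filter fun i => hp.eigenvalues i < 0).card) ∧
    Even m := by
  classical
  have herm : ∀ p : Fin n → ℝ, (∑ α, (p α : ℂ) • A α).IsHermitian := by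
    intro p
    show (∑ α, (p α : ℂ) • A α)ᴴ = _
    rw [Matrix.conjTranspose_sum]
    exact Finset.sum_congr rfl fun α _ => by
      rw [Matrix.conjTranspose_smul, hHerm α, RCLike.star_def, Complex.conj_ofReal]
  have hsum : ∀ p : Fin n → ℝ, p ≠ 0 →
      (Finset.univ.filter fun i => 0 < (herm p).eigenvalues i).card +
      (Finset.univ.filter fun i => (herm p).eigenvalues i < 0).card = m :=
    fun p hp => count_sum (herm p) (hell p hp)
  have hflip : ∀ p : Fin n → ℝ, p ≠ 0 →
      (Finset.univ.filter fun i => (herm p).eigenvalues i < 0).card =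
      (Finset.univ.filter fun i => 0 < (herm (-p)).eigenvalues i).card := by
    intro p hp
    have hMneg : (∑ α, (((-p) α : ℝ) : ℂ) • A α) = -(∑ α, ((p α : ℝ) : ℂ) • A α) := by
      rw [← Finset.sum_neg_distrib]
      exact Finset.sum_congr rfl fun α _ => by
        rw [← neg_smul]
        congr 1
        simp
    have he : (herm (-p)).eigenvalues = (Matrix.IsHermitian.neg (herm p)).eigenvalues :=
      eigen_congr hMneg _ _
    rw [← posC_neg_eq_negC (herm p) (hell p hp)]
    simp_rw [he]
  -- local constancy of the positive count
  have hloc : ∀ p₀ : Fin n → ℝ, p₀ ≠ 0 → ∃ U : Set (Fin n → ℝ), IsOpen U ∧ p₀ ∈ U ∧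
      ∀ p ∈ U, p ≠ 0 →
        (Finset.univ.filter fun i => 0 < (herm p).eigenvalues i).card =
        (Finset.univ.filter fun i => 0 < (herm p₀).eigenvalues i).card := by
    intro p₀ hp₀
    obtain ⟨Vp, hrankp, hVp⟩ := exists_posC (herm p₀)
    obtain ⟨Vn, hrankn, hVn⟩ := exists_negC (herm p₀)
    obtain ⟨U₁, hU₁o, hU₁m, hU₁⟩ := stability A p₀ Vp hVp
    have hBsum : ∀ p : Fin n → ℝ,
        (∑ α, (p α : ℂ) • (fun β => -A β) α) = -(∑ α, (p α : ℂ) • A α) := by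
      intro p
      rw [← Finset.sum_neg_distrib]
      exact Finset.sum_congr rfl fun α _ => by rw [smul_neg]
    obtain ⟨U₂, hU₂o, hU₂m, hU₂⟩ := stability (fun β => -A β) p₀ Vn (by
      intro x hx h0
      rw [hBsum p₀, qf_neg]
      linarith [hVn x hx h0])
    refine ⟨U₁ ∩ U₂, hU₁o.inter hU₂o, ⟨hU₁m, hU₂m⟩, ?_⟩
    intro p hp hpne
    have h1 : (Finset.univ.filter fun i => 0 < (herm p₀).eigenvalues i).card ≤
        (Finset.univ.filter fun i => 0 < (herm p).eigenvalues i).card := by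
      rw [← hrankp]
      exact le_posC (herm p) Vp (fun x hx h0 => hU₁ p hp.1 x hx h0)
    have h2 : (Finset.univ.filter fun i => (herm p₀).eigenvalues i < 0).card ≤
        (Finset.univ.filter fun i => (herm p).eigenvalues i < 0).card := by
      rw [← hrankn]
      refine le_negC (herm p) Vn (fun x hx h0 => ?_)
      have := hU₂ p hp.2 x hx h0
      rw [hBsum p, qf_neg] at this
      linarith
    have e1 := hsum p hpne
    have e2 := hsum p₀ hp₀
    omega
  -- connectivity
  set S : Set (Fin n → ℝ) := {p | p ≠ 0} with hS
  have hconn : IsPreconnected S := by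
    have hrank : 1 < Module.rank ℝ (Fin n → ℝ) := by
      rw [rank_fun']
      simp only [Fintype.card_fin]
      exact_mod_cast lt_of_lt_of_le one_lt_two (by exact_mod_cast hn)
    have := (isConnected_compl_singleton_of_one_lt_rank hrank (0 : Fin n → ℝ)).isPreconnected
    have hSeq : S = {(0 : Fin n → ℝ)}ᶜ := by
      ext p; simp [hS]
    rwa [hSeq]
  haveI : PreconnectedSpace ↥S := Subtype.preconnectedSpace hconn
  set g : ↥S → ℕ := fun q =>
    (Finset.univ.filter fun i => 0 < (herm q.1).eigenvalues i).card with hg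
  have hglc : IsLocallyConstant g := by
    rw [IsLocallyConstant.iff_eventually_eq]
    intro q
    obtain ⟨U, hUo, hUm, hU⟩ := hloc q.1 q.2
    have hnhds : {q' : ↥S | q'.1 ∈ U} ∈ nhds q :=
      continuous_subtype_val.continuousAt.preimage_mem_nhds (hUo.mem_nhds hUm)
    exact Filter.eventually_of_mem hnhds fun q' hq' => hU q'.1 hq' q'.2
  have hkey : ∀ p : Fin n → ℝ, p ≠ 0 →
      (Finset.univ.filter fun i => 0 < (herm p).eigenvalues i).card =
      (Finset.univ.filter fun i => (herm p).eigenvalues i < 0).card := by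
    intro p hp
    have hnp : -p ≠ 0 := fun h => hp (by simpa using congrArg Neg.neg h)
    have := hglc.apply_eq_of_preconnectedSpace ⟨p, hp⟩ ⟨-p, hnp⟩
    simp only [hg] at this
    rw [hflip p hp]
    exact this
  constructor
  · intro p hp hpH
    rw [Subsingleton.elim hpH (herm p)]
    exact hkey p hp
  · set p₁ : Fin n → ℝ := fun _ => 1 with hp₁def
    have hp₁ : p₁ ≠ 0 := by
      intro h
      have := congrFun h ⟨0, by omega⟩
      norm_num [hp₁def] at this
    have := hkey p₁ hp₁
    have := hsum p₁ hp₁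
    exact ⟨(Finset.univ.filter fun i => 0 < (herm p₁).eigenvalues i).card, by omega⟩
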